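/- Let p, d, q, n ∈ ℕ, let E : ℝ^p → ℝ^d be differentiable, let F_1, …, F_n : ℝ^d → ℝ^d each be three times continuously differentiable (ContDiff ℝ 3), let W : ℝ^d → ℝ^q be a continuous linear map and b ∈ ℝ^q, define f_λ(x) = W(R_λ(E(x))) + b with R_λ = (id + λF_n) ∘ ⋯ ∘ (id + λF_1), and let D ⊆ ℝ^p be a nonempty finite dataset. Writing J_λ(x) for the matrix (in standard bases) of the Fréchet derivative of f_λ at x, A(x) for the matrix of W ∘ (DE)(x), and B(x) for the matrix of Σ_{i=1}^n W ∘ (DF_i)(E(x)) ∘ (DE)(x), the geometric complexity ⟨f_λ, D⟩_G = (1/|D|) Σ_{x ∈ D} ‖J_λ(x)‖_F² satisfies: λ ↦ ⟨f_λ, D⟩_G − ( (1/|D|) Σ_{x ∈ D} ‖A(x)‖_F² + 2λ · (1/|D|) Σ_{x ∈ D} Tr(A(x)ᵀ B(x)) ) is O(λ²) as λ → 0. -/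

import Mathlib

open Topology Asymptotics Finset Matrix

/-- A single residual block `(1 + λ F)(z) = z + λ • F z`. -/
noncomputable def resBlock {d : ℕ} (lam : ℝ)
    (F : EuclideanSpace ℝ (Fin d) → EuclideanSpace ℝ (Fin d)) :
    EuclideanSpace ℝ (Fin d) → EuclideanSpace ℝ (Fin d) :=
  fun z => z + lam • F z

/-- The residual tower `(1 + λ F_m) ∘ ⋯ ∘ (1 + λ F_1)` built from the blocks
`F 1, …, F m`. -/
noncomputable def resTower {d : ℕ} (lam : ℝ)
    (F : ℕ → EuclideanSpace ℝ (Fin d) → EuclideanSpace ℝ (Fin d)) :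
    ℕ → EuclideanSpace ℝ (Fin d) → EuclideanSpace ℝ (Fin d)
  | 0 => id
  | m + 1 => resBlock lam (F (m + 1)) ∘ resTower lam F m

/-- The matrix, in the standard bases, of a continuous linear map
`ℝ^p → ℝ^q`. -/
noncomputable def clmMatrix {p q : ℕ}
    (T : EuclideanSpace ℝ (Fin p) →L[ℝ] EuclideanSpace ℝ (Fin q)) :
    Matrix (Fin q) (Fin p) ℝ :=
  Matrix.of fun i j => T (EuclideanSpace.single j 1) i

/-- The Frobenius norm `‖C‖_F = √(∑ᵢⱼ Cᵢⱼ²)` of a real matrix. -/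
noncomputable def frobNorm {q p : ℕ} (C : Matrix (Fin q) (Fin p) ℝ) : ℝ :=
  Real.sqrt (∑ i, ∑ j, C i j ^ 2)


section Aux

variable {d n : ℕ} {F : ℕ → EuclideanSpace ℝ (Fin d) → EuclideanSpace ℝ (Fin d)}

lemma resTower_zero (F : ℕ → EuclideanSpace ℝ (Fin d) → EuclideanSpace ℝ (Fin d)) :
    ∀ m, resTower (0 : ℝ) F m = id := by
  intro m
  induction m with
  | zero => rfl
  | succ k ih => funext z; simp [resTower, resBlock, ih]

lemma resTower_contDiff (hF : ∀ i ∈ Finset.Icc 1 n, ContDiff ℝ 3 (F i))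
    {m : ℕ} (hm : m ≤ n) :
    ContDiff ℝ 3 (fun p : ℝ × EuclideanSpace ℝ (Fin d) => resTower p.1 F m p.2) := by
  induction m with
  | zero => simpa [resTower] using contDiff_snd
  | succ k ih =>
    have hk := ih (le_trans (Nat.le_succ k) hm)
    have hFk : ContDiff ℝ 3 (F (k + 1)) :=
      hF _ (Finset.mem_Icc.2 ⟨Nat.succ_le_succ (Nat.zero_le k), hm⟩)
    have heq : (fun p : ℝ × EuclideanSpace ℝ (Fin d) => resTower p.1 F (k + 1) p.2)
        = fun p => resTower p.1 F k p.2 + p.1 • F (k + 1) (resTower p.1 F k p.2) := rfl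
    rw [heq]
    exact hk.add (contDiff_fst.smul (hFk.comp hk))

lemma resTower_contDiff_snd (hF : ∀ i ∈ Finset.Icc 1 n, ContDiff ℝ 3 (F i))
    {m : ℕ} (hm : m ≤ n) (lam : ℝ) : ContDiff ℝ 3 (resTower lam F m) := by
  have := (resTower_contDiff hF hm).comp
    (ContDiff.prodMk (contDiff_const (c := lam)) contDiff_id)
  exact this

/-- The λ-parametrized Jacobian of the tower, as a function of λ, is `C²`. -/
lemma phi_contDiff (hF : ∀ i ∈ Finset.Icc 1 n, ContDiff ℝ 3 (F i))
    {m : ℕ} (hm : m ≤ n) (z0 : EuclideanSpace ℝ (Fin d)) :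
    ContDiff ℝ 2 (fun lam : ℝ => fderiv ℝ (resTower lam F m) z0) := by
  exact ContDiff.fderiv (f := fun lam z => resTower lam F m z) (g := fun _ => z0)
    (resTower_contDiff hF hm) contDiff_const (by norm_num)

/-- Recursion for the Jacobian of the tower. -/
lemma fderiv_resTower_succ (hF : ∀ i ∈ Finset.Icc 1 n, ContDiff ℝ 3 (F i))
    {m : ℕ} (hm : m + 1 ≤ n) (lam : ℝ) (z0 : EuclideanSpace ℝ (Fin d)) :
    fderiv ℝ (resTower lam F (m + 1)) z0
      = ((ContinuousLinearMap.id ℝ (EuclideanSpace ℝ (Fin d)))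
            + lam • fderiv ℝ (F (m + 1)) (resTower lam F m z0)).comp
          (fderiv ℝ (resTower lam F m) z0) := by
  have hFk : ContDiff ℝ 3 (F (m + 1)) :=
    hF _ (Finset.mem_Icc.2 ⟨Nat.succ_le_succ (Nat.zero_le m), hm⟩)
  have hTm : HasFDerivAt (resTower lam F m) (fderiv ℝ (resTower lam F m) z0) z0 :=
    ((resTower_contDiff_snd hF (le_trans (Nat.le_succ m) hm) lam).differentiable
      (by norm_num)).differentiableAt.hasFDerivAt
  have hB : HasFDerivAt (resBlock lam (F (m + 1)))
      ((ContinuousLinearMap.id ℝ (EuclideanSpace ℝ (Fin d)))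
        + lam • fderiv ℝ (F (m + 1)) (resTower lam F m z0)) (resTower lam F m z0) := by
    have hFd : HasFDerivAt (F (m + 1)) (fderiv ℝ (F (m + 1)) (resTower lam F m z0))
        (resTower lam F m z0) :=
      ((hFk.differentiable (by norm_num)).differentiableAt).hasFDerivAt
    exact (hasFDerivAt_id (resTower lam F m z0)).add (hFd.const_smul lam)
  exact (hB.comp z0 hTm).fderiv

lemma hasDerivAt_phi (hF : ∀ i ∈ Finset.Icc 1 n, ContDiff ℝ 3 (F i))
    {m : ℕ} (hm : m ≤ n) (z0 : EuclideanSpace ℝ (Fin d)) :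
    HasDerivAt (fun lam : ℝ => fderiv ℝ (resTower lam F m) z0)
      (∑ i ∈ Finset.Icc 1 m, fderiv ℝ (F i) z0) 0 := by
  induction m with
  | zero =>
    have : (fun lam : ℝ => fderiv ℝ (resTower lam F 0) z0)
        = fun _ => ContinuousLinearMap.id ℝ (EuclideanSpace ℝ (Fin d)) := by
      funext lam; show fderiv ℝ id z0 = _; exact fderiv_id
    rw [this]; simpa using hasDerivAt_const (0 : ℝ) _
  | succ k ih =>
    have hk : k ≤ n := le_trans (Nat.le_succ k) hm
    have hFk : ContDiff ℝ 3 (F (k + 1)) :=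
      hF _ (Finset.mem_Icc.2 ⟨Nat.succ_le_succ (Nat.zero_le k), hm⟩)
    have hkk := ih hk
    -- the curve λ ↦ resTower λ F k z0 is C³
    have hcurve : ContDiff ℝ 3 (fun lam : ℝ => resTower lam F k z0) := by
      have := (resTower_contDiff hF hk).comp
        (ContDiff.prodMk (contDiff_id (E := ℝ)) (contDiff_const (c := z0)))
      exact this
    -- A λ = DF_{k+1}(resTower λ F k z0) is differentiable
    set A : ℝ → (EuclideanSpace ℝ (Fin d) →L[ℝ] EuclideanSpace ℝ (Fin d)) :=
      fun lam => fderiv ℝ (F (k + 1)) (resTower lam F k z0) with hA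
    have hAc : ContDiff ℝ 2 A := by
      have h1 : ContDiff ℝ 2 (fderiv ℝ (F (k + 1))) := hFk.fderiv_right (by norm_num)
      exact h1.comp (hcurve.of_le (by norm_num))
    have hAd : DifferentiableAt ℝ A 0 := (hAc.differentiable (by norm_num)).differentiableAt
    have hA' : HasDerivAt A (deriv A 0) 0 := hAd.hasDerivAt
    set A' := deriv A 0
    -- u λ = id + λ • A λ
    have hu : HasDerivAt (fun lam : ℝ =>
        (ContinuousLinearMap.id ℝ (EuclideanSpace ℝ (Fin d))) + lam • A lam)
        (A 0) 0 := by
      have h1 : HasDerivAt (fun lam : ℝ => lam • A lam) (A 0) 0 := by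
        exact ((hasDerivAt_id (0:ℝ)).smul hA').congr_deriv (by simp)
      have := (hasDerivAt_const (0:ℝ)
        (ContinuousLinearMap.id ℝ (EuclideanSpace ℝ (Fin d)))).add h1
      simpa using h1
    have hvu := hu.clm_comp hkk
    have hfun : (fun lam : ℝ => fderiv ℝ (resTower lam F (k + 1)) z0)
        = fun lam => ((ContinuousLinearMap.id ℝ (EuclideanSpace ℝ (Fin d)))
            + lam • A lam).comp (fderiv ℝ (resTower lam F k) z0) := by
      funext lam; exact fderiv_resTower_succ hF hm lam z0
    rw [hfun]
    have hphi0 : fderiv ℝ (resTower (0:ℝ) F k) z0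
        = ContinuousLinearMap.id ℝ (EuclideanSpace ℝ (Fin d)) := by
      rw [resTower_zero]; exact fderiv_id
    have hA0 : A 0 = fderiv ℝ (F (k + 1)) z0 := by
      rw [hA]; simp [resTower_zero]
    convert hvu using 1
    rw [hphi0, hA0, Finset.sum_Icc_succ_top (a:=1) (Nat.one_le_iff_ne_zero.2 (Nat.succ_ne_zero k))]
    simp [add_comm]

end Aux

/-- A `C²` function equals its first-order Taylor expansion up to `O(λ²)`. -/
lemma quad_isBigO {g : ℝ → ℝ} {c : ℝ} (hg : ContDiff ℝ 2 g) (hc : HasDerivAt g c 0) :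
    (fun lam : ℝ => g lam - (g 0 + lam * c)) =O[𝓝 0] (fun lam : ℝ => lam ^ 2) := by
  set h : ℝ → ℝ := fun lam => g lam - (g 0 + lam * c) with hh
  have hgd : Differentiable ℝ g := hg.differentiable (by norm_num)
  have hderiv : ∀ t : ℝ, deriv h t = deriv g t - c := by
    intro t
    have h1 : HasDerivAt (fun lam : ℝ => g 0 + lam * c) c t := by
      simpa using (hasDerivAt_id t).mul_const c
    exact ((hgd t).hasDerivAt.sub h1).deriv
  have hdg : Differentiable ℝ (deriv g) := by
    have h1 : ContDiff ℝ 1 (fderiv ℝ g) := hg.fderiv_right (by norm_num)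
    have h2 : Differentiable ℝ (fun t : ℝ => fderiv ℝ g t 1) :=
      (h1.differentiable (by norm_num)).clm_apply (differentiable_const 1)
    have : deriv g = fun t : ℝ => fderiv ℝ g t 1 := rfl
    rw [this]; exact h2
  have hdg0 : deriv g 0 = c := hc.deriv
  have hO : (fun t : ℝ => deriv g t - c) =O[𝓝 0] (fun t : ℝ => t) := by
    have := (hdg 0).isBigO_sub
    simpa [hdg0] using this
  obtain ⟨C, hCpos, hCw⟩ := hO.exists_pos
  have hC := hCw.bound
  rw [Metric.eventually_nhds_iff] at hC
  obtain ⟨ε, hε, hball⟩ := hC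
  rw [Asymptotics.isBigO_iff]
  refine ⟨C, Metric.eventually_nhds_iff.2 ⟨ε, hε, ?_⟩⟩
  intro lam hlam
  have habs : dist lam (0:ℝ) < ε := hlam
  rw [Real.dist_eq, sub_zero] at habs
  -- bound deriv h on uIcc 0 lam by C * |lam|
  have hbound : ∀ t ∈ Set.uIcc (0:ℝ) lam, ‖deriv h t‖ ≤ C * |lam| := by
    intro t ht
    have htle : |t| ≤ |lam| := by
      rcases Set.mem_uIcc.1 ht with ⟨h1, h2⟩ | ⟨h1, h2⟩
      · rw [abs_of_nonneg h1]; exact le_trans h2 (le_abs_self lam)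
      · rw [abs_of_nonpos h2, abs_of_nonpos (le_trans h1 h2)]; exact neg_le_neg h1
    have htball : dist t (0:ℝ) < ε := by
      rw [Real.dist_eq, sub_zero]; exact lt_of_le_of_lt htle habs
    have := hball htball
    rw [hderiv]
    calc ‖deriv g t - c‖ ≤ C * ‖t‖ := this
      _ ≤ C * |lam| := by
          exact mul_le_mul_of_nonneg_left htle hCpos.le
  have hdiff : ∀ t ∈ Set.uIcc (0:ℝ) lam, DifferentiableAt ℝ h t := by
    intro t _
    exact (hgd t).sub ((differentiable_const (g 0)).add ((differentiable_id.mul_const c)) t)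
  have h0 : h 0 = 0 := by simp [hh]
  have := (convex_uIcc (0:ℝ) lam).norm_image_sub_le_of_norm_deriv_le (f := h) (C := C * |lam|)
      hdiff hbound Set.left_mem_uIcc Set.right_mem_uIcc
  rw [h0, sub_zero, sub_zero] at this
  calc ‖h lam‖ ≤ C * |lam| * ‖lam‖ := this
    _ = C * ‖lam ^ 2‖ := by rw [Real.norm_eq_abs, Real.norm_eq_abs]; rw [abs_pow]; ring

/-- **First-order behavior of the geometric complexity in the residual scale λ.**
For the residual network `f_λ(x) = W(R_λ(E(x))) + b`, with Jacobian matrix `J_λ(x)`,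
`A(x)` the matrix of `W ∘ (D E)(x)` and `B(x)` the matrix of
`∑ᵢ W ∘ (D Fᵢ)(E(x)) ∘ (D E)(x)`, the geometric complexity
`⟨f_λ, D⟩_G = (1/|D|) ∑_{x ∈ D} ‖J_λ(x)‖_F²` over a nonempty finite dataset `D`
satisfies `⟨f_λ, D⟩_G = (1/|D|) ∑_x ‖A(x)‖_F² + 2λ (1/|D|) ∑_x Tr(A(x)ᵀ B(x)) + O(λ²)`
as `λ → 0`. -/
theorem geometric_complexity_expansion (p d q n : ℕ)
    (E : EuclideanSpace ℝ (Fin p) → EuclideanSpace ℝ (Fin d))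
    (hE : Differentiable ℝ E)
    (F : ℕ → EuclideanSpace ℝ (Fin d) → EuclideanSpace ℝ (Fin d))
    (hF : ∀ i ∈ Finset.Icc 1 n, ContDiff ℝ 3 (F i))
    (W : EuclideanSpace ℝ (Fin d) →L[ℝ] EuclideanSpace ℝ (Fin q))
    (b : EuclideanSpace ℝ (Fin q))
    (D : Finset (EuclideanSpace ℝ (Fin p))) (hD : D.Nonempty) :
    (fun lam : ℝ =>
        (∑ x ∈ D,
            frobNorm (clmMatrix
              (fderiv ℝ (fun y => W (resTower lam F n (E y)) + b) x)) ^ 2) / D.card -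
          ((∑ x ∈ D, frobNorm (clmMatrix (W.comp (fderiv ℝ E x))) ^ 2) / D.card
             + 2 * lam *
               ((∑ x ∈ D,
                   Matrix.trace
                     ((clmMatrix (W.comp (fderiv ℝ E x)))ᵀ *
                       clmMatrix (∑ i ∈ Finset.Icc 1 n,
                         W.comp ((fderiv ℝ (F i) (E x)).comp (fderiv ℝ E x))))) / D.card)))
      =O[𝓝 0] (fun lam : ℝ => lam ^ 2) := by
  classical
  -- entries of the Jacobian matrix as functions of λ
  set ent : ℝ → EuclideanSpace ℝ (Fin p) → Fin q → Fin p → ℝ :=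
    fun lam x i j =>
      W (fderiv ℝ (resTower lam F n) (E x) (fderiv ℝ E x (EuclideanSpace.single j 1))) i
    with hent
  -- entries of the first-order matrix B
  set dent : EuclideanSpace ℝ (Fin p) → Fin q → Fin p → ℝ :=
    fun x i j =>
      W ((∑ i' ∈ Finset.Icc 1 n, fderiv ℝ (F i') (E x))
          (fderiv ℝ E x (EuclideanSpace.single j 1))) i
    with hdent
  -- Chain rule: the Jacobian of the full model
  have hJ : ∀ (lam : ℝ) (x : EuclideanSpace ℝ (Fin p)),
      fderiv ℝ (fun y => W (resTower lam F n (E y)) + b) x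
        = (W.comp (fderiv ℝ (resTower lam F n) (E x))).comp (fderiv ℝ E x) := by
    intro lam x
    have hEx : HasFDerivAt E (fderiv ℝ E x) x := (hE x).hasFDerivAt
    have hT : HasFDerivAt (resTower lam F n) (fderiv ℝ (resTower lam F n) (E x)) (E x) :=
      (((resTower_contDiff_snd hF le_rfl lam).differentiable (by norm_num)) (E x)).hasFDerivAt
    have h1 := (W.hasFDerivAt.comp x (hT.comp x hEx)).add_const b
    exact h1.fderiv
  -- squared Frobenius norm of the Jacobian matrix is the sum of entries squared
  have hfm : ∀ (lam : ℝ) (x : EuclideanSpace ℝ (Fin p)),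
      frobNorm (clmMatrix (fderiv ℝ (fun y => W (resTower lam F n (E y)) + b) x)) ^ 2
        = ∑ i, ∑ j, ent lam x i j ^ 2 := by
    intro lam x
    rw [hJ lam x]
    have h1 : ∀ i j, clmMatrix ((W.comp (fderiv ℝ (resTower lam F n) (E x))).comp
        (fderiv ℝ E x)) i j = ent lam x i j := by
      intro i j; simp [clmMatrix, hent]
    rw [frobNorm, Real.sq_sqrt (by positivity)]
    exact Finset.sum_congr rfl fun i _ => Finset.sum_congr rfl fun j _ => by rw [h1]
  -- entries at λ = 0
  have hent0 : ∀ (x : EuclideanSpace ℝ (Fin p)) i j,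
      clmMatrix (W.comp (fderiv ℝ E x)) i j = ent 0 x i j := by
    intro x i j
    simp [clmMatrix, hent, resTower_zero, fderiv_id]
  have hA2 : ∀ (x : EuclideanSpace ℝ (Fin p)),
      frobNorm (clmMatrix (W.comp (fderiv ℝ E x))) ^ 2 = ∑ i, ∑ j, ent 0 x i j ^ 2 := by
    intro x
    rw [frobNorm, Real.sq_sqrt (by positivity)]
    exact Finset.sum_congr rfl fun i _ => Finset.sum_congr rfl fun j _ => by rw [hent0]
  -- entries of B
  have hBent : ∀ (x : EuclideanSpace ℝ (Fin p)) i j,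
      clmMatrix (∑ i' ∈ Finset.Icc 1 n,
        W.comp ((fderiv ℝ (F i') (E x)).comp (fderiv ℝ E x))) i j = dent x i j := by
    intro x i j
    simp [clmMatrix, hdent, ContinuousLinearMap.sum_apply, map_sum, Finset.sum_apply]
  -- trace formula
  have htr : ∀ (x : EuclideanSpace ℝ (Fin p)),
      Matrix.trace ((clmMatrix (W.comp (fderiv ℝ E x)))ᵀ *
          clmMatrix (∑ i ∈ Finset.Icc 1 n,
            W.comp ((fderiv ℝ (F i) (E x)).comp (fderiv ℝ E x))))
        = ∑ i, ∑ j, ent 0 x i j * dent x i j := by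
    intro x
    rw [Matrix.trace]
    simp only [Matrix.diag, Matrix.mul_apply, Matrix.transpose_apply]
    rw [Finset.sum_comm]
    exact Finset.sum_congr rfl fun i _ => Finset.sum_congr rfl fun j _ => by
      rw [hent0, hBent]
  -- regularity and derivative of each entry in λ
  have hentcd : ∀ (x : EuclideanSpace ℝ (Fin p)) i j,
      ContDiff ℝ 2 (fun lam => ent lam x i j) := by
    intro x i j
    have h1 : ContDiff ℝ 2 (fun lam : ℝ =>
        fderiv ℝ (resTower lam F n) (E x) (fderiv ℝ E x (EuclideanSpace.single j 1))) :=
      (phi_contDiff hF le_rfl (E x)).clm_apply contDiff_const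
    exact (EuclideanSpace.proj i).contDiff.comp (W.contDiff.comp h1)
  have hentd : ∀ (x : EuclideanSpace ℝ (Fin p)) i j,
      HasDerivAt (fun lam => ent lam x i j) (dent x i j) 0 := by
    intro x i j
    set v := fderiv ℝ E x (EuclideanSpace.single j 1)
    have h1 : HasDerivAt (fun lam : ℝ => fderiv ℝ (resTower lam F n) (E x) v)
        ((∑ i' ∈ Finset.Icc 1 n, fderiv ℝ (F i') (E x)) v) 0 := by
      simpa using (hasDerivAt_phi hF le_rfl (E x)).clm_apply (hasDerivAt_const 0 v)
    have h2 := W.hasFDerivAt.comp_hasDerivAt 0 h1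
    exact (EuclideanSpace.proj i).hasFDerivAt.comp_hasDerivAt 0 h2
  -- the geometric complexity as a function of λ
  set N : ℝ := (D.card : ℝ) with hNdef
  set G : ℝ → ℝ := fun lam => (∑ x ∈ D, ∑ i, ∑ j, ent lam x i j ^ 2) / N with hG
  set c2 : ℝ := (∑ x ∈ D, ∑ i, ∑ j, 2 * ent 0 x i j * dent x i j) / N with hc2
  have hGcd : ContDiff ℝ 2 G :=
    (ContDiff.sum fun x _ => ContDiff.sum fun i _ => ContDiff.sum fun j _ =>
      (hentcd x i j).pow 2).div_const N
  have hGd : HasDerivAt G c2 0 := by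
    refine HasDerivAt.div_const ?_ N
    refine HasDerivAt.fun_sum fun x _ => HasDerivAt.fun_sum fun i _ => HasDerivAt.fun_sum fun j _ => ?_
    have := (hentd x i j).pow 2
    simp at this; exact this
  have hkey := quad_isBigO hGcd hGd
  have heq : (fun lam : ℝ =>
        (∑ x ∈ D,
            frobNorm (clmMatrix
              (fderiv ℝ (fun y => W (resTower lam F n (E y)) + b) x)) ^ 2) / D.card -
          ((∑ x ∈ D, frobNorm (clmMatrix (W.comp (fderiv ℝ E x))) ^ 2) / D.card
             + 2 * lam *
               ((∑ x ∈ D,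
                   Matrix.trace
                     ((clmMatrix (W.comp (fderiv ℝ E x)))ᵀ *
                       clmMatrix (∑ i ∈ Finset.Icc 1 n,
                         W.comp ((fderiv ℝ (F i) (E x)).comp (fderiv ℝ E x))))) / D.card)))
      = fun lam => G lam - (G 0 + lam * c2) := by
    funext lam
    have e1 : (∑ x ∈ D,
        frobNorm (clmMatrix
          (fderiv ℝ (fun y => W (resTower lam F n (E y)) + b) x)) ^ 2) / (D.card : ℝ)
        = G lam := by
      rw [hG]
      congr 1
      exact Finset.sum_congr rfl fun x _ => hfm lam x
    have e2 : (∑ x ∈ D, frobNorm (clmMatrix (W.comp (fderiv ℝ E x))) ^ 2) / (D.card : ℝ)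
        = G 0 := by
      rw [hG]
      congr 1
      exact Finset.sum_congr rfl fun x _ => hA2 x
    have e3 : (2 : ℝ) * lam *
        ((∑ x ∈ D,
            Matrix.trace
              ((clmMatrix (W.comp (fderiv ℝ E x)))ᵀ *
                clmMatrix (∑ i ∈ Finset.Icc 1 n,
                  W.comp ((fderiv ℝ (F i) (E x)).comp (fderiv ℝ E x))))) / (D.card : ℝ))
        = lam * c2 := by
      rw [hc2]
      have : (∑ x ∈ D,
          Matrix.trace
            ((clmMatrix (W.comp (fderiv ℝ E x)))ᵀ *
              clmMatrix (∑ i ∈ Finset.Icc 1 n,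
                W.comp ((fderiv ℝ (F i) (E x)).comp (fderiv ℝ E x)))))
          = ∑ x ∈ D, ∑ i, ∑ j, ent 0 x i j * dent x i j :=
        Finset.sum_congr rfl fun x _ => htr x
      rw [this]
      have h2 : (∑ x ∈ D, ∑ i, ∑ j, 2 * ent 0 x i j * dent x i j)
          = 2 * ∑ x ∈ D, ∑ i, ∑ j, ent 0 x i j * dent x i j := by
        rw [Finset.mul_sum]
        refine Finset.sum_congr rfl fun x _ => ?_
        rw [Finset.mul_sum]
        refine Finset.sum_congr rfl fun i _ => ?_
        rw [Finset.mul_sum]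
        refine Finset.sum_congr rfl fun j _ => by ring
      rw [h2]
      ring
    rw [e1, e2, e3]
  rw [heq]
  exact hkey
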